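/- Let X be a compact metric space, Y a Hausdorff topological space, f : X → Y a continuous surjective map such that the preimage of every point of Y is connected, and let T ⊆ Y be a closed connected set. Then f⁻¹(T) is connected. -/

import Mathlib

open Set

/-- Preimages of closed connected sets under monotone continuous surjections of compact
metric spaces onto Hausdorff spaces are connected (Whyburn). -/
theorem monotone_preimage_connected {X Y : Type*} [MetricSpace X] [CompactSpace X]
    [TopologicalSpace Y] [T2Space Y]
    (f : X → Y) (hf : Continuous f) (hsurj : Function.Surjective f)
    (hmono : ∀ y : Y, IsPreconnected (f ⁻¹' {y}))
    (T : Set Y) (hTclosed : IsClosed T) (hTconn : IsConnected T) :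
    IsConnected (f ⁻¹' T) := by
  set S : Set X := f ⁻¹' T with hS
  have hSclosed : IsClosed S := hTclosed.preimage hf
  have : CompactSpace S := isCompact_iff_compactSpace.mp hSclosed.isCompact
  have : ConnectedSpace T := Subtype.connectedSpace hTconn
  -- restricted map
  let g : S → T := fun x => ⟨f x, x.2⟩
  have hgc : Continuous g := Continuous.subtype_mk (hf.comp continuous_subtype_val) _
  have hgsurj : Function.Surjective g := by
    rintro ⟨t, ht⟩
    obtain ⟨x, hx⟩ := hsurj t
    have hxS : x ∈ S := by show f x ∈ T; rw [hx]; exact ht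
    exact ⟨⟨x, hxS⟩, Subtype.ext hx⟩
  have hfibers : ∀ t : T, IsConnected (g ⁻¹' {t}) := by
    rintro ⟨t, ht⟩
    have hsub : f ⁻¹' {t} ⊆ S := by
      intro x hx
      rw [mem_preimage, mem_singleton_iff] at hx
      show f x ∈ T
      rw [hx]; exact ht
    have himg : (Subtype.val : S → X) '' (g ⁻¹' {⟨t, ht⟩}) = f ⁻¹' {t} := by
      ext x
      simp only [mem_image, mem_preimage, mem_singleton_iff]
      constructor
      · rintro ⟨⟨x', hx'⟩, hgx, rfl⟩
        simpa [g, Subtype.ext_iff] using hgx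
      · intro hx
        exact ⟨⟨x, hsub hx⟩, by simpa [g, Subtype.ext_iff] using hx, rfl⟩
    constructor
    · obtain ⟨x, hx⟩ := hsurj t
      exact ⟨⟨x, hsub (by simp [hx])⟩, by simp [g, Subtype.ext_iff, hx]⟩
    · rw [← Topology.IsInducing.subtypeVal.isPreconnected_image, himg]
      exact hmono t
  have hclosedmap : IsClosedMap g := by
    intro C hC
    exact (hC.isCompact.image hgc).isClosed
  have hcl : ∀ A : Set T, IsClosed A ↔ IsClosed (g ⁻¹' A) := by
    intro A
    constructor
    · exact fun h => h.preimage hgc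
    · intro h
      have : g '' (g ⁻¹' A) = A := image_preimage_eq A hgsurj
      rw [← this]
      exact hclosedmap _ h
  obtain ⟨t⟩ : Nonempty T := ⟨⟨(hTconn.1).choose, (hTconn.1).choose_spec⟩⟩
  have hcc : connectedComponent t = univ := PreconnectedSpace.connectedComponent_eq_univ t
  have huniv : IsConnected (univ : Set S) := by
    have := preimage_connectedComponent_connected hfibers
      (Topology.isCoinducing_iff_isClosed.mpr fun A => (hcl A).symm) t
    rwa [hcc, preimage_univ] at this
  have : IsConnected ((Subtype.val : S → X) '' univ) :=
    huniv.image Subtype.val continuous_subtype_val.continuousOn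
  simpa using this
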